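/- Let B be a canonical Blaschke product of degree 3 with zeros 0, a_1, a_2. For λ on the unit circle with preimages z_1, z_2, z_3 of λ under B, write B(z)/(z(B(z) - λ)) = m_1/(z - z_1) + m_2/(z - z_2) + m_3/(z - z_3) as a partial fraction decomposition. Then m_1 + m_2 + m_3 = 1 and 0 < m_j < 1 for j = 1, 2, 3. -/

import Mathlib

open Complex

lemma sq_lt_imp {x y : ℝ} (hx : 0 ≤ x) (hy : 0 ≤ y) (h : x ^ 2 < y ^ 2) : x < y := by
  by_contra h'
  push_neg at h'
  nlinarith

lemma circle_abs (a₁ a₂ lam z : ℂ) (ha₁ : ‖a₁‖ < 1) (ha₂ : ‖a₂‖ < 1)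
    (hlam : ‖lam‖ = 1)
    (hq₁ : 1 - (starRingEnd ℂ) a₁ * z ≠ 0) (hq₂ : 1 - (starRingEnd ℂ) a₂ * z ≠ 0)
    (heq : z * (z - a₁) * (z - a₂) =
      lam * ((1 - (starRingEnd ℂ) a₁ * z) * (1 - (starRingEnd ℂ) a₂ * z))) :
    ‖z‖ = 1 := by
  have key : ∀ a : ℂ, ‖z - a‖ ^ 2 - ‖1 - (starRingEnd ℂ) a * z‖ ^ 2
      = (‖z‖ ^ 2 - 1) * (1 - ‖a‖ ^ 2) := by
    intro a
    rw [Complex.sq_norm, Complex.sq_norm, Complex.sq_norm, Complex.sq_norm]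
    simp only [Complex.normSq_apply, Complex.sub_re, Complex.sub_im, Complex.mul_re,
      Complex.mul_im, Complex.conj_re, Complex.conj_im, Complex.one_re, Complex.one_im]
    ring
  have habs : ‖z‖ * ‖z - a₁‖ * ‖z - a₂‖
      = ‖1 - (starRingEnd ℂ) a₁ * z‖ * ‖1 - (starRingEnd ℂ) a₂ * z‖ := by
    have h := congrArg norm heq
    simpa [map_mul, hlam] using h
  have k1 := key a₁
  have k2 := key a₂
  have hs₁ : 0 < ‖1 - (starRingEnd ℂ) a₁ * z‖ := norm_pos_iff.mpr hq₁
  have hs₂ : 0 < ‖1 - (starRingEnd ℂ) a₂ * z‖ := norm_pos_iff.mpr hq₂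
  have hr₁ : 0 ≤ ‖z - a₁‖ := norm_nonneg _
  have hr₂ : 0 ≤ ‖z - a₂‖ := norm_nonneg _
  have ht : 0 ≤ ‖z‖ := norm_nonneg _
  have hn₁ : 0 < 1 - ‖a₁‖ ^ 2 := by nlinarith [norm_nonneg a₁]
  have hn₂ : 0 < 1 - ‖a₂‖ ^ 2 := by nlinarith [norm_nonneg a₂]
  set t := ‖z‖
  set r₁ := ‖z - a₁‖
  set r₂ := ‖z - a₂‖
  set s₁ := ‖1 - (starRingEnd ℂ) a₁ * z‖
  set s₂ := ‖1 - (starRingEnd ℂ) a₂ * z‖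
  rcases lt_trichotomy t 1 with h | h | h
  · exfalso
    have ht2 : t ^ 2 - 1 < 0 := by nlinarith
    have hm1 := mul_neg_of_neg_of_pos ht2 hn₁
    have hm2 := mul_neg_of_neg_of_pos ht2 hn₂
    have hr1s : r₁ < s₁ := sq_lt_imp hr₁ hs₁.le (by linarith)
    have hr2s : r₂ < s₂ := sq_lt_imp hr₂ hs₂.le (by linarith)
    have h1 : r₁ * r₂ < s₁ * s₂ := mul_lt_mul'' hr1s hr2s hr₁ hr₂
    have h2 : t * r₁ * r₂ ≤ r₁ * r₂ := by nlinarith [mul_nonneg hr₁ hr₂]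
    linarith
  · exact h
  · exfalso
    have ht2 : 0 < t ^ 2 - 1 := by nlinarith
    have hm1 := mul_pos ht2 hn₁
    have hm2 := mul_pos ht2 hn₂
    have hr1s : s₁ < r₁ := sq_lt_imp hs₁.le hr₁ (by linarith)
    have hr2s : s₂ < r₂ := sq_lt_imp hs₂.le hr₂ (by linarith)
    have h1 : s₁ * s₂ < r₁ * r₂ := mul_lt_mul'' hr1s hr2s hs₁.le hs₂.le
    have h2 : r₁ * r₂ < t * r₁ * r₂ := by nlinarith [mul_pos (hs₁.trans hr1s) (hs₂.trans hr2s)]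
    linarith

set_option maxHeartbeats 1000000 in
lemma weight_aux (a₁ a₂ lam z : ℂ) (ha₁ : ‖a₁‖ < 1) (ha₂ : ‖a₂‖ < 1)
    (hlam : ‖lam‖ = 1)
    (hq₁ : 1 - (starRingEnd ℂ) a₁ * z ≠ 0) (hq₂ : 1 - (starRingEnd ℂ) a₂ * z ≠ 0)
    (heq : z * (z - a₁) * (z - a₂) =
      lam * ((1 - (starRingEnd ℂ) a₁ * z) * (1 - (starRingEnd ℂ) a₂ * z)))
    (m : ℝ)
    (hm : (m : ℂ) * (2 * z ^ 2 - (a₁ + a₂ + lam * (starRingEnd ℂ) a₁ * (starRingEnd ℂ) a₂) * z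
        + lam / z) = (z - a₁) * (z - a₂)) :
    0 < m ∧ m < 1 := by
  have hlam0 : lam ≠ 0 := by
    intro h; rw [h] at hlam; simp at hlam
  have habs : ‖z‖ = 1 := circle_abs a₁ a₂ lam z ha₁ ha₂ hlam hq₁ hq₂ heq
  have hz0 : z ≠ 0 := by
    intro h; rw [h] at habs; simp at habs
  have hns : Complex.normSq z = 1 := by
    rw [← Complex.sq_norm, habs]; norm_num
  have hzc : (starRingEnd ℂ) z = z⁻¹ := by
    apply eq_inv_of_mul_eq_one_left
    rw [mul_comm, Complex.mul_conj, hns]; norm_num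
  have hR : lam * ((1 - (starRingEnd ℂ) a₁ * z) * (1 - (starRingEnd ℂ) a₂ * z)) ≠ 0 :=
    mul_ne_zero hlam0 (mul_ne_zero hq₁ hq₂)
  have hp1 : z - a₁ ≠ 0 := by
    intro h; apply hR; rw [← heq, h]; ring
  have hp2 : z - a₂ ≠ 0 := by
    intro h; apply hR; rw [← heq, h]; ring
  have hp : (z - a₁) * (z - a₂) ≠ 0 := mul_ne_zero hp1 hp2
  have hr₁ : 0 < Complex.normSq (z - a₁) := Complex.normSq_pos.mpr hp1
  have hr₂ : 0 < Complex.normSq (z - a₂) := Complex.normSq_pos.mpr hp2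
  have hn₁ : 0 < 1 - Complex.normSq a₁ := by
    have := Complex.sq_norm a₁; nlinarith [norm_nonneg a₁]
  have hn₂ : 0 < 1 - Complex.normSq a₂ := by
    have := Complex.sq_norm a₂; nlinarith [norm_nonneg a₂]
  set w : ℝ := 1 + (1 - Complex.normSq a₁) / Complex.normSq (z - a₁)
      + (1 - Complex.normSq a₂) / Complex.normSq (z - a₂) with hw
  have hw1 : 1 < w := by
    have t1 : 0 < (1 - Complex.normSq a₁) / Complex.normSq (z - a₁) := div_pos hn₁ hr₁
    have t2 : 0 < (1 - Complex.normSq a₂) / Complex.normSq (z - a₂) := div_pos hn₂ hr₂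
    rw [hw]; linarith
  -- key identity
  have hr₁c : (Complex.normSq (z - a₁) : ℂ) = (z - a₁) * (1 - (starRingEnd ℂ) a₁ * z) / z := by
    rw [← Complex.mul_conj]; simp only [map_sub, hzc]; field_simp
  have hr₂c : (Complex.normSq (z - a₂) : ℂ) = (z - a₂) * (1 - (starRingEnd ℂ) a₂ * z) / z := by
    rw [← Complex.mul_conj]; simp only [map_sub, hzc]; field_simp
  have hid : 2 * z ^ 2 - (a₁ + a₂ + lam * (starRingEnd ℂ) a₁ * (starRingEnd ℂ) a₂) * z
      + lam / z = (w : ℂ) * ((z - a₁) * (z - a₂)) := by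
    have hlam_eq : lam = z * (z - a₁) * (z - a₂) /
        ((1 - (starRingEnd ℂ) a₁ * z) * (1 - (starRingEnd ℂ) a₂ * z)) := by
      rw [eq_div_iff (mul_ne_zero hq₁ hq₂)]; linear_combination -heq
    have hn₁c' : (Complex.normSq a₁ : ℂ) = a₁ * (starRingEnd ℂ) a₁ := (Complex.mul_conj a₁).symm
    have hn₂c' : (Complex.normSq a₂ : ℂ) = a₂ * (starRingEnd ℂ) a₂ := (Complex.mul_conj a₂).symm
    rw [hw]
    push_cast
    rw [hr₁c, hr₂c, hn₁c', hn₂c', hlam_eq]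
    have hq₁' : 1 - z * (starRingEnd ℂ) a₁ ≠ 0 := by rwa [mul_comm]
    have hq₂' : 1 - z * (starRingEnd ℂ) a₂ ≠ 0 := by rwa [mul_comm]
    field_simp [hq₁, hq₂, hq₁', hq₂', mul_ne_zero hq₁ hq₂]
    ring
  have hmw : ((m * w : ℝ) : ℂ) = 1 := by
    have h1 : ((m * w : ℝ) : ℂ) * ((z - a₁) * (z - a₂)) = 1 * ((z - a₁) * (z - a₂)) :=
      calc ((m * w : ℝ) : ℂ) * ((z - a₁) * (z - a₂))
          = (m : ℂ) * ((w : ℂ) * ((z - a₁) * (z - a₂))) := by push_cast; ring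
        _ = (m : ℂ) * (2 * z ^ 2 - (a₁ + a₂ + lam * (starRingEnd ℂ) a₁ * (starRingEnd ℂ) a₂) * z
            + lam / z) := by rw [hid]
        _ = (z - a₁) * (z - a₂) := hm
        _ = 1 * ((z - a₁) * (z - a₂)) := (one_mul _).symm
    exact mul_right_cancel₀ hp h1
  have hmw' : m * w = 1 := by exact_mod_cast hmw
  have hw0 : 0 < w := by linarith
  have hminv : m = w⁻¹ := by
    field_simp
    linarith [hmw']
  constructor
  · rw [hminv]; positivity
  · rw [hminv]
    rw [inv_lt_one_iff₀]
    right; exact hw1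

theorem blaschke_deg3_partial_fraction_weights (a₁ a₂ : ℂ)
    (ha₁ : ‖a₁‖ < 1) (ha₂ : ‖a₂‖ < 1)
    (B : ℂ → ℂ)
    (hB : ∀ z, B z = z * ((z - a₁) / (1 - (starRingEnd ℂ) a₁ * z)) *
      ((z - a₂) / (1 - (starRingEnd ℂ) a₂ * z)))
    (lam : ℂ) (hlam : ‖lam‖ = 1)
    (z₁ z₂ z₃ : ℂ)
    (hz : z₁ ≠ z₂ ∧ z₂ ≠ z₃ ∧ z₁ ≠ z₃)
    (h₁ : B z₁ = lam) (h₂ : B z₂ = lam) (h₃ : B z₃ = lam)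
    (m₁ m₂ m₃ : ℝ)
    (hm : ∀ z : ℂ, z ≠ z₁ → z ≠ z₂ → z ≠ z₃ → z ≠ 0 →
      1 - (starRingEnd ℂ) a₁ * z ≠ 0 → 1 - (starRingEnd ℂ) a₂ * z ≠ 0 →
      B z ≠ lam →
      B z / (z * (B z - lam)) =
        (m₁ : ℂ) / (z - z₁) + (m₂ : ℂ) / (z - z₂) + (m₃ : ℂ) / (z - z₃)) :
    m₁ + m₂ + m₃ = 1 ∧ (0 < m₁ ∧ m₁ < 1) ∧ (0 < m₂ ∧ m₂ < 1) ∧ (0 < m₃ ∧ m₃ < 1) := by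
  obtain ⟨hz12, hz23, hz13⟩ := hz
  have hlam0 : lam ≠ 0 := by
    intro h; rw [h] at hlam; simp at hlam
  -- preliminary facts for any preimage of lam
  have main_pre : ∀ z' : ℂ, B z' = lam →
      (1 - (starRingEnd ℂ) a₁ * z' ≠ 0 ∧ 1 - (starRingEnd ℂ) a₂ * z' ≠ 0 ∧ z' ≠ 0 ∧
        z' * (z' - a₁) * (z' - a₂) =
          lam * ((1 - (starRingEnd ℂ) a₁ * z') * (1 - (starRingEnd ℂ) a₂ * z'))) := by
    intro z' hz'
    rw [hB] at hz'
    have h1 : 1 - (starRingEnd ℂ) a₁ * z' ≠ 0 := by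
      intro h; apply hlam0; rw [← hz', h]; simp
    have h2 : 1 - (starRingEnd ℂ) a₂ * z' ≠ 0 := by
      intro h; apply hlam0; rw [← hz', h]; simp
    have h0 : z' ≠ 0 := by
      intro h; apply hlam0; rw [← hz', h]; simp
    refine ⟨h1, h2, h0, ?_⟩
    rw [mul_div_assoc' z', div_mul_div_comm, div_eq_iff (mul_ne_zero h1 h2)] at hz'
    linear_combination hz'
  obtain ⟨hq11, hq21, hz10, heq₁⟩ := main_pre z₁ h₁
  obtain ⟨hq12, hq22, hz20, heq₂⟩ := main_pre z₂ h₂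
  obtain ⟨hq13, hq23, hz30, heq₃⟩ := main_pre z₃ h₃
  -- Vieta: z (z-a₁)(z-a₂) - lam (1-c₁z)(1-c₂z) = (z-z₁)(z-z₂)(z-z₃)
  have e₁ : ((z₁+z₂+z₃) - (a₁+a₂) - lam * (starRingEnd ℂ) a₁ * (starRingEnd ℂ) a₂) * z₁^2
      + ((a₁*a₂ + lam*((starRingEnd ℂ) a₁ + (starRingEnd ℂ) a₂)) - (z₁*z₂+z₁*z₃+z₂*z₃)) * z₁
      + (z₁*z₂*z₃ - lam) = 0 := by linear_combination heq₁
  have e₂ : ((z₁+z₂+z₃) - (a₁+a₂) - lam * (starRingEnd ℂ) a₁ * (starRingEnd ℂ) a₂) * z₂^2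
      + ((a₁*a₂ + lam*((starRingEnd ℂ) a₁ + (starRingEnd ℂ) a₂)) - (z₁*z₂+z₁*z₃+z₂*z₃)) * z₂
      + (z₁*z₂*z₃ - lam) = 0 := by linear_combination heq₂
  have e₃ : ((z₁+z₂+z₃) - (a₁+a₂) - lam * (starRingEnd ℂ) a₁ * (starRingEnd ℂ) a₂) * z₃^2
      + ((a₁*a₂ + lam*((starRingEnd ℂ) a₁ + (starRingEnd ℂ) a₂)) - (z₁*z₂+z₁*z₃+z₂*z₃)) * z₃
      + (z₁*z₂*z₃ - lam) = 0 := by linear_combination heq₃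
  have h12 : ((z₁+z₂+z₃) - (a₁+a₂) - lam * (starRingEnd ℂ) a₁ * (starRingEnd ℂ) a₂) * (z₁+z₂)
      + ((a₁*a₂ + lam*((starRingEnd ℂ) a₁ + (starRingEnd ℂ) a₂)) - (z₁*z₂+z₁*z₃+z₂*z₃)) = 0 := by
    have hne : z₁ - z₂ ≠ 0 := sub_ne_zero.mpr hz12
    have h : (((z₁+z₂+z₃) - (a₁+a₂) - lam * (starRingEnd ℂ) a₁ * (starRingEnd ℂ) a₂) * (z₁+z₂)
      + ((a₁*a₂ + lam*((starRingEnd ℂ) a₁ + (starRingEnd ℂ) a₂)) - (z₁*z₂+z₁*z₃+z₂*z₃))) * (z₁ - z₂) = 0 := by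
      linear_combination e₁ - e₂
    exact (mul_eq_zero.mp h).resolve_right hne
  have h13 : ((z₁+z₂+z₃) - (a₁+a₂) - lam * (starRingEnd ℂ) a₁ * (starRingEnd ℂ) a₂) * (z₁+z₃)
      + ((a₁*a₂ + lam*((starRingEnd ℂ) a₁ + (starRingEnd ℂ) a₂)) - (z₁*z₂+z₁*z₃+z₂*z₃)) = 0 := by
    have hne : z₁ - z₃ ≠ 0 := sub_ne_zero.mpr hz13
    have h : (((z₁+z₂+z₃) - (a₁+a₂) - lam * (starRingEnd ℂ) a₁ * (starRingEnd ℂ) a₂) * (z₁+z₃)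
      + ((a₁*a₂ + lam*((starRingEnd ℂ) a₁ + (starRingEnd ℂ) a₂)) - (z₁*z₂+z₁*z₃+z₂*z₃))) * (z₁ - z₃) = 0 := by
      linear_combination e₁ - e₃
    exact (mul_eq_zero.mp h).resolve_right hne
  have hA : (z₁+z₂+z₃) - (a₁+a₂) - lam * (starRingEnd ℂ) a₁ * (starRingEnd ℂ) a₂ = 0 := by
    have hne : z₂ - z₃ ≠ 0 := sub_ne_zero.mpr hz23
    have h : ((z₁+z₂+z₃) - (a₁+a₂) - lam * (starRingEnd ℂ) a₁ * (starRingEnd ℂ) a₂) * (z₂ - z₃) = 0 := by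
      linear_combination h12 - h13
    exact (mul_eq_zero.mp h).resolve_right hne
  have hB0 : (a₁*a₂ + lam*((starRingEnd ℂ) a₁ + (starRingEnd ℂ) a₂)) - (z₁*z₂+z₁*z₃+z₂*z₃) = 0 := by
    linear_combination h12 - (z₁+z₂) * hA
  have hC0 : z₁*z₂*z₃ - lam = 0 := by
    linear_combination e₁ - z₁^2 * hA - z₁ * hB0
  have hDE : ∀ z : ℂ, z * (z - a₁) * (z - a₂)
      - lam * ((1 - (starRingEnd ℂ) a₁ * z) * (1 - (starRingEnd ℂ) a₂ * z))
      = (z - z₁) * (z - z₂) * (z - z₃) := by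
    intro z
    linear_combination z^2 * hA + z * hB0 + hC0
  classical
  have hgood : ∀ w : ℂ, w ≠ z₁ → w ≠ z₂ → w ≠ z₃ → w ≠ 0 →
      1 - (starRingEnd ℂ) a₁ * w ≠ 0 → 1 - (starRingEnd ℂ) a₂ * w ≠ 0 →
      (w - a₁) * (w - a₂) = (m₁:ℂ) * ((w-z₂)*(w-z₃)) + (m₂:ℂ) * ((w-z₁)*(w-z₃))
        + (m₃:ℂ) * ((w-z₁)*(w-z₂)) := by
    intro w hw1 hw2 hw3 hw0 hq1 hq2
    have hwz1 : w - z₁ ≠ 0 := sub_ne_zero.mpr hw1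
    have hwz2 : w - z₂ ≠ 0 := sub_ne_zero.mpr hw2
    have hwz3 : w - z₃ ≠ 0 := sub_ne_zero.mpr hw3
    have hE : (w - z₁) * (w - z₂) * (w - z₃) ≠ 0 :=
      mul_ne_zero (mul_ne_zero hwz1 hwz2) hwz3
    have hBne : B w ≠ lam := by
      intro h
      obtain ⟨_, _, _, heqw⟩ := main_pre w h
      apply hE
      rw [← hDE w]
      linear_combination heqw
    have h := hm w hw1 hw2 hw3 hw0 hq1 hq2 hBne
    rw [hB] at h
    have hBlam : w * ((w - a₁) / (1 - (starRingEnd ℂ) a₁ * w)) *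
        ((w - a₂) / (1 - (starRingEnd ℂ) a₂ * w)) - lam
        = ((w - z₁) * (w - z₂) * (w - z₃)) /
          ((1 - (starRingEnd ℂ) a₁ * w) * (1 - (starRingEnd ℂ) a₂ * w)) := by
      rw [← hDE w, mul_div_assoc' w, div_mul_div_comm, eq_div_iff (mul_ne_zero hq1 hq2), sub_mul,
        div_mul_cancel₀ _ (mul_ne_zero hq1 hq2)]
    rw [hBlam] at h
    have hq1' : 1 - w * (starRingEnd ℂ) a₁ ≠ 0 := by rwa [mul_comm]
    have hq2' : 1 - w * (starRingEnd ℂ) a₂ ≠ 0 := by rwa [mul_comm]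
    field_simp [hq1', hq2'] at h
    have h' : (w - a₁) * (w - a₂) * (w * ((w - z₁) * (w - z₂) * (w - z₃)))
        = ((m₁:ℂ) * ((w-z₂)*(w-z₃)) + (m₂:ℂ) * ((w-z₁)*(w-z₃)) + (m₃:ℂ) * ((w-z₁)*(w-z₂)))
          * (w * ((w - z₁) * (w - z₂) * (w - z₃))) := by
      linear_combination (w * ((w - z₁) * (w - z₂) * (w - z₃))) * h
    exact mul_right_cancel₀ (mul_ne_zero hw0 hE) h'
  -- pick three good points
  set bad : Set ℂ := {z₁, z₂, z₃, 0, ((starRingEnd ℂ) a₁)⁻¹, ((starRingEnd ℂ) a₂)⁻¹} with hbad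
  have hfin : bad.Finite := by
    rw [hbad]
    exact Set.Finite.insert _ (Set.Finite.insert _ (Set.Finite.insert _ (Set.Finite.insert _
      (Set.Finite.insert _ (Set.finite_singleton _)))))
  have hcinf : badᶜ.Infinite := hfin.infinite_compl
  have hf : ∀ w : ℂ, w ∈ badᶜ →
      ((m₁:ℂ) + (m₂:ℂ) + (m₃:ℂ) - 1) * w^2
      + ((a₁+a₂) - ((m₁:ℂ)*(z₂+z₃) + (m₂:ℂ)*(z₁+z₃) + (m₃:ℂ)*(z₁+z₂))) * w
      + ((m₁:ℂ)*z₂*z₃ + (m₂:ℂ)*z₁*z₃ + (m₃:ℂ)*z₁*z₂ - a₁*a₂) = 0 := by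
    intro w hw
    simp only [hbad, Set.mem_compl_iff, Set.mem_insert_iff, Set.mem_singleton_iff, not_or] at hw
    obtain ⟨hw1, hw2, hw3, hw0, hwc1, hwc2⟩ := hw
    have hq1 : 1 - (starRingEnd ℂ) a₁ * w ≠ 0 := by
      intro h
      have hc : (starRingEnd ℂ) a₁ ≠ 0 := by
        intro h0; rw [h0] at h; simp at h
      apply hwc1
      rw [inv_eq_one_div, eq_div_iff hc]
      linear_combination -h
    have hq2 : 1 - (starRingEnd ℂ) a₂ * w ≠ 0 := by
      intro h
      have hc : (starRingEnd ℂ) a₂ ≠ 0 := by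
        intro h0; rw [h0] at h; simp at h
      apply hwc2
      rw [inv_eq_one_div, eq_div_iff hc]
      linear_combination -h
    have hg := hgood w hw1 hw2 hw3 hw0 hq1 hq2
    linear_combination -hg
  obtain ⟨w₁, hw₁⟩ := hcinf.nonempty
  obtain ⟨w₂, hw₂'⟩ := (hcinf.diff (Set.finite_singleton w₁)).nonempty
  obtain ⟨w₃, hw₃'⟩ := (hcinf.diff (Set.Finite.insert w₁ (Set.finite_singleton w₂))).nonempty
  obtain ⟨hw₂, hw₂w₁⟩ := hw₂'
  obtain ⟨hw₃, hw₃w⟩ := hw₃'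
  rw [Set.mem_singleton_iff] at hw₂w₁
  simp only [Set.mem_insert_iff, Set.mem_singleton_iff, not_or] at hw₃w
  obtain ⟨hw₃w₁, hw₃w₂⟩ := hw₃w
  have f₁ := hf w₁ hw₁
  have f₂ := hf w₂ hw₂
  have f₃ := hf w₃ hw₃
  -- Vandermonde again
  have g12 : ((m₁:ℂ) + (m₂:ℂ) + (m₃:ℂ) - 1) * (w₁+w₂)
      + ((a₁+a₂) - ((m₁:ℂ)*(z₂+z₃) + (m₂:ℂ)*(z₁+z₃) + (m₃:ℂ)*(z₁+z₂))) = 0 := by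
    have hne : w₁ - w₂ ≠ 0 := sub_ne_zero.mpr (fun h => hw₂w₁ (h.symm))
    have h : (((m₁:ℂ) + (m₂:ℂ) + (m₃:ℂ) - 1) * (w₁+w₂)
      + ((a₁+a₂) - ((m₁:ℂ)*(z₂+z₃) + (m₂:ℂ)*(z₁+z₃) + (m₃:ℂ)*(z₁+z₂)))) * (w₁ - w₂) = 0 := by
      linear_combination f₁ - f₂
    exact (mul_eq_zero.mp h).resolve_right hne
  have g13 : ((m₁:ℂ) + (m₂:ℂ) + (m₃:ℂ) - 1) * (w₁+w₃)
      + ((a₁+a₂) - ((m₁:ℂ)*(z₂+z₃) + (m₂:ℂ)*(z₁+z₃) + (m₃:ℂ)*(z₁+z₂))) = 0 := by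
    have hne : w₁ - w₃ ≠ 0 := sub_ne_zero.mpr (fun h => hw₃w₁ (h.symm))
    have h : (((m₁:ℂ) + (m₂:ℂ) + (m₃:ℂ) - 1) * (w₁+w₃)
      + ((a₁+a₂) - ((m₁:ℂ)*(z₂+z₃) + (m₂:ℂ)*(z₁+z₃) + (m₃:ℂ)*(z₁+z₂)))) * (w₁ - w₃) = 0 := by
      linear_combination f₁ - f₃
    exact (mul_eq_zero.mp h).resolve_right hne
  have hα : (m₁:ℂ) + (m₂:ℂ) + (m₃:ℂ) - 1 = 0 := by
    have hne : w₂ - w₃ ≠ 0 := sub_ne_zero.mpr (fun h => hw₃w₂ (h.symm))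
    have h : ((m₁:ℂ) + (m₂:ℂ) + (m₃:ℂ) - 1) * (w₂ - w₃) = 0 := by
      linear_combination g12 - g13
    exact (mul_eq_zero.mp h).resolve_right hne
  have hβ : (a₁+a₂) - ((m₁:ℂ)*(z₂+z₃) + (m₂:ℂ)*(z₁+z₃) + (m₃:ℂ)*(z₁+z₂)) = 0 := by
    linear_combination g12 - (w₁+w₂) * hα
  have hγ : (m₁:ℂ)*z₂*z₃ + (m₂:ℂ)*z₁*z₃ + (m₃:ℂ)*z₁*z₂ - a₁*a₂ = 0 := by
    linear_combination f₁ - w₁^2 * hα - w₁ * hβ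
  -- conclusion part 1
  have hsum : m₁ + m₂ + m₃ = 1 := by
    have : ((m₁ + m₂ + m₃ : ℝ) : ℂ) = 1 := by push_cast; linear_combination hα
    exact_mod_cast this
  -- evaluation at the roots
  have hp1 : (z₁-a₁)*(z₁-a₂) = (m₁:ℂ)*((z₁-z₂)*(z₁-z₃)) := by
    linear_combination -z₁^2 * hα - z₁ * hβ - hγ
  have hp2 : (z₂-a₁)*(z₂-a₂) = (m₂:ℂ)*((z₂-z₁)*(z₂-z₃)) := by
    linear_combination -z₂^2 * hα - z₂ * hβ - hγ
  have hp3 : (z₃-a₁)*(z₃-a₂) = (m₃:ℂ)*((z₃-z₁)*(z₃-z₂)) := by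
    linear_combination -z₃^2 * hα - z₃ * hβ - hγ
  have hdiv1 : lam / z₁ = z₂ * z₃ := by
    rw [div_eq_iff hz10]; linear_combination -hC0
  have hdiv2 : lam / z₂ = z₁ * z₃ := by
    rw [div_eq_iff hz20]; linear_combination -hC0
  have hdiv3 : lam / z₃ = z₁ * z₂ := by
    rw [div_eq_iff hz30]; linear_combination -hC0
  have key1 : (m₁:ℂ) * (2 * z₁^2 - (a₁ + a₂ + lam * (starRingEnd ℂ) a₁ * (starRingEnd ℂ) a₂) * z₁
      + lam / z₁) = (z₁-a₁)*(z₁-a₂) := by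
    rw [hdiv1]; linear_combination (m₁:ℂ) * z₁ * hA - hp1
  have key2 : (m₂:ℂ) * (2 * z₂^2 - (a₁ + a₂ + lam * (starRingEnd ℂ) a₁ * (starRingEnd ℂ) a₂) * z₂
      + lam / z₂) = (z₂-a₁)*(z₂-a₂) := by
    rw [hdiv2]; linear_combination (m₂:ℂ) * z₂ * hA - hp2
  have key3 : (m₃:ℂ) * (2 * z₃^2 - (a₁ + a₂ + lam * (starRingEnd ℂ) a₁ * (starRingEnd ℂ) a₂) * z₃
      + lam / z₃) = (z₃-a₁)*(z₃-a₂) := by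
    rw [hdiv3]; linear_combination (m₃:ℂ) * z₃ * hA - hp3
  exact ⟨hsum, weight_aux a₁ a₂ lam z₁ ha₁ ha₂ hlam hq11 hq21 heq₁ m₁ key1,
    weight_aux a₁ a₂ lam z₂ ha₁ ha₂ hlam hq12 hq22 heq₂ m₂ key2,
    weight_aux a₁ a₂ lam z₃ ha₁ ha₂ hlam hq13 hq23 heq₃ m₃ key3⟩
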